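/- Let A and Ã be nonsingular n×n real matrices, W a symmetric positive definite n×n matrix, and A_p = (Ã⁻¹ W Ã⁻ᵀ)(Aᵀ W⁻¹ A). Then every eigenvalue λ of A_p satisfies |λ − 1| ≤ (1 + κ₂(W))‖E‖₂ + κ₂(W)‖E‖₂², where E = AÃ⁻¹ − I and κ₂(W) = ‖W‖₂‖W⁻¹‖₂. -/

import Mathlib

set_option maxHeartbeats 1000000
set_option synthInstance.maxHeartbeats 400000

open Matrix

/-- The spectral (operator 2-) norm of a real matrix. -/
noncomputable def specNorm {m : Type*} [Fintype m] [DecidableEq m]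
    (A : Matrix m m ℝ) : ℝ :=
  ‖LinearMap.toContinuousLinearMap (Matrix.toEuclideanLin A)‖

section helpers

variable {m : Type*} [Fintype m] [DecidableEq m]

lemma specNorm_eq (A : Matrix m m ℝ) :
    specNorm A = ‖Matrix.toEuclideanCLM (𝕜 := ℝ) A‖ := by
  rfl

lemma specNorm_nonneg (A : Matrix m m ℝ) : 0 ≤ specNorm A := norm_nonneg _

lemma specNorm_mul_le (A B : Matrix m m ℝ) :
    specNorm (A * B) ≤ specNorm A * specNorm B := by
  rw [specNorm_eq, specNorm_eq, specNorm_eq, _root_.map_mul]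
  exact norm_mul_le _ _

lemma specNorm_add_le (A B : Matrix m m ℝ) :
    specNorm (A + B) ≤ specNorm A + specNorm B := by
  rw [specNorm_eq, specNorm_eq, specNorm_eq, map_add]
  exact norm_add_le _ _

lemma specNorm_transpose (A : Matrix m m ℝ) : specNorm Aᵀ = specNorm A := by
  have h : Aᵀ = Aᴴ := (Matrix.conjTranspose_eq_transpose_of_trivial A).symm
  rw [h, specNorm_eq, specNorm_eq, ← Matrix.star_eq_conjTranspose, map_star]
  rw [ContinuousLinearMap.star_eq_adjoint]
  exact ContinuousLinearMap.adjoint.norm_map _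

/-- key bound : mulVec by a real matrix, squared-sum form. -/
lemma sq_sum_mulVec_le (F : Matrix m m ℝ) (x : m → ℝ) :
    ∑ i, (F.mulVec x i) ^ 2 ≤ specNorm F ^ 2 * ∑ i, (x i) ^ 2 := by
  set T := LinearMap.toContinuousLinearMap (Matrix.toEuclideanLin F) with hT
  set y : EuclideanSpace ℝ m := (WithLp.equiv 2 (m → ℝ)).symm x with hy
  have hTy : T y = (WithLp.equiv 2 (m → ℝ)).symm (F.mulVec x) := by
    rw [hT, hy]
    simp [Matrix.toEuclideanLin_toLp, Matrix.toLin'_apply]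
  have h1 : ‖T y‖ ≤ specNorm F * ‖y‖ := T.le_opNorm y
  have hny : ‖y‖ ^ 2 = ∑ i, (x i) ^ 2 := by
    rw [EuclideanSpace.norm_eq, Real.sq_sqrt (by positivity)]
    simp [hy, sq_abs]
  have hnTy : ‖T y‖ ^ 2 = ∑ i, (F.mulVec x i) ^ 2 := by
    rw [hTy, EuclideanSpace.norm_eq, Real.sq_sqrt (by positivity)]
    simp [sq_abs]
  calc ∑ i, (F.mulVec x i) ^ 2 = ‖T y‖ ^ 2 := hnTy.symm
    _ ≤ (specNorm F * ‖y‖) ^ 2 := pow_le_pow_left₀ (norm_nonneg _) h1 2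
    _ = specNorm F ^ 2 * ‖y‖ ^ 2 := by ring
    _ = specNorm F ^ 2 * ∑ i, (x i) ^ 2 := by rw [hny]

/-- eigenvalue bound: complex eigenvalue of a real matrix bounded by specNorm. -/
lemma abs_mem_spectrum_le (F : Matrix m m ℝ) (μ : ℂ)
    (hμ : μ ∈ spectrum ℂ (F.map (algebraMap ℝ ℂ))) :
    ‖μ‖ ≤ specNorm F := by
  set Fc := F.map (algebraMap ℝ ℂ) with hFc
  rw [spectrum.mem_iff] at hμ
  have hdet : (algebraMap ℂ (Matrix m m ℂ) μ - Fc).det = 0 := by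
    by_contra hd
    exact hμ ((Matrix.isUnit_iff_isUnit_det _).mpr (isUnit_iff_ne_zero.mpr hd))
  obtain ⟨v, hv0, hv⟩ := Matrix.exists_mulVec_eq_zero_iff.mpr hdet
  have heig : ∀ i, Fc.mulVec v i = μ * v i := by
    rw [Matrix.sub_mulVec] at hv
    have h2 : (algebraMap ℂ (Matrix m m ℂ) μ).mulVec v = μ • v := by
      rw [Algebra.algebraMap_eq_smul_one, Matrix.smul_mulVec, Matrix.one_mulVec]
    have h3 := sub_eq_zero.mp hv
    rw [h2] at h3
    intro i
    have := congrFun h3.symm i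
    simpa using this
  set u : m → ℝ := fun i => (v i).re with hu
  set w : m → ℝ := fun i => (v i).im with hw
  have hre : ∀ i, (Fc.mulVec v i).re = F.mulVec u i := by
    intro i
    simp [Matrix.mulVec, dotProduct, hFc, Complex.re_sum, Complex.mul_re, hu]
  have him : ∀ i, (Fc.mulVec v i).im = F.mulVec w i := by
    intro i
    simp [Matrix.mulVec, dotProduct, hFc, Complex.im_sum, Complex.mul_im, hw]
  have hnormSq : ∀ i, Complex.normSq (v i) = u i ^ 2 + w i ^ 2 := by
    intro i
    simp [Complex.normSq_apply, hu, hw, sq]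
  set S : ℝ := ∑ i, Complex.normSq (v i) with hS
  have hSpos : 0 < S := by
    obtain ⟨i, hi⟩ := Function.ne_iff.mp hv0
    exact Finset.sum_pos' (fun j _ => Complex.normSq_nonneg _)
      ⟨i, Finset.mem_univ i, Complex.normSq_pos.mpr hi⟩
  have key : Complex.normSq μ * S ≤ specNorm F ^ 2 * S := by
    have lhs_eq : Complex.normSq μ * S = ∑ i, ((F.mulVec u i) ^ 2 + (F.mulVec w i) ^ 2) := by
      rw [hS, Finset.mul_sum]
      refine Finset.sum_congr rfl fun i _ => ?_
      rw [← Complex.normSq_mul, ← heig i, Complex.normSq_apply, hre, him]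
      ring
    rw [lhs_eq]
    have := add_le_add (sq_sum_mulVec_le F u) (sq_sum_mulVec_le F w)
    calc ∑ i, ((F.mulVec u i) ^ 2 + (F.mulVec w i) ^ 2)
        = (∑ i, (F.mulVec u i) ^ 2) + ∑ i, (F.mulVec w i) ^ 2 := Finset.sum_add_distrib
      _ ≤ specNorm F ^ 2 * (∑ i, u i ^ 2) + specNorm F ^ 2 * (∑ i, w i ^ 2) := this
      _ = specNorm F ^ 2 * ∑ i, (u i ^ 2 + w i ^ 2) := by
          rw [Finset.sum_add_distrib]; ring
      _ = specNorm F ^ 2 * S := by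
          rw [hS]
          congr 1
          exact (Finset.sum_congr rfl fun i _ => (hnormSq i)).symm
  have hμ2 : Complex.normSq μ ≤ specNorm F ^ 2 := le_of_mul_le_mul_right key hSpos
  rw [Complex.norm_def]
  calc Real.sqrt (Complex.normSq μ) ≤ Real.sqrt (specNorm F ^ 2) := Real.sqrt_le_sqrt hμ2
    _ = specNorm F := Real.sqrt_sq (specNorm_nonneg F)

end helpers

theorem stmt0 {n : ℕ} (A Atil W : Matrix (Fin n) (Fin n) ℝ)
    (hA : IsUnit A) (hAtil : IsUnit Atil) (hW : W.PosDef)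
    (Ap : Matrix (Fin n) (Fin n) ℝ)
    (hAp : Ap = (Atil⁻¹ * W * (Atil⁻¹)ᵀ) * (Aᵀ * W⁻¹ * A))
    (E : Matrix (Fin n) (Fin n) ℝ) (hE : E = A * Atil⁻¹ - 1)
    (κ : ℝ) (hκ : κ = specNorm W * specNorm W⁻¹)
    (lam : ℂ) (hlam : lam ∈ spectrum ℂ (Ap.map (algebraMap ℝ ℂ))) :
    ‖lam - 1‖ ≤ (1 + κ) * specNorm E + κ * specNorm E ^ 2 := by
  have hWdet : IsUnit W.det := isUnit_iff_ne_zero.mpr (ne_of_gt hW.det_pos)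
  have hAtildet : IsUnit Atil.det := (Matrix.isUnit_iff_isUnit_det Atil).mp hAtil
  have hB : A * Atil⁻¹ = 1 + E := by rw [hE]; abel
  set F : Matrix (Fin n) (Fin n) ℝ := E + W * Eᵀ * W⁻¹ + W * Eᵀ * W⁻¹ * E with hF
  have hWW : W * W⁻¹ = 1 := Matrix.mul_nonsing_inv W hWdet
  have h1' : (Atil⁻¹)ᵀ * Aᵀ = 1 + Eᵀ := by
    rw [← Matrix.transpose_mul, hB, Matrix.transpose_add, Matrix.transpose_one]
  have hA' : A = (1 + E) * Atil := by
    rw [← hB, Matrix.mul_assoc, Matrix.nonsing_inv_mul Atil hAtildet, Matrix.mul_one]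
  have hexp : W * (1 + Eᵀ) * W⁻¹ * (1 + E) = 1 + F := by
    have e1 : W * (1 + Eᵀ) * W⁻¹ = 1 + W * Eᵀ * W⁻¹ := by
      rw [mul_add, Matrix.mul_one, add_mul, hWW]
    rw [e1, add_mul, one_mul, mul_add, Matrix.mul_one, hF]
    abel
  have hconj : Ap = Atil⁻¹ * (1 + F) * Atil := by
    calc Ap = Atil⁻¹ * (W * ((Atil⁻¹)ᵀ * Aᵀ) * W⁻¹) * A := by rw [hAp]; noncomm_ring
      _ = Atil⁻¹ * (W * (1 + Eᵀ) * W⁻¹) * ((1 + E) * Atil) := by rw [h1', ← hA']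
      _ = Atil⁻¹ * (W * (1 + Eᵀ) * W⁻¹ * (1 + E)) * Atil := by noncomm_ring
      _ = Atil⁻¹ * (1 + F) * Atil := by rw [hexp]
  set φ : Matrix (Fin n) (Fin n) ℝ →+* Matrix (Fin n) (Fin n) ℂ :=
    (algebraMap ℝ ℂ).mapMatrix with hφdef
  have hφ : ∀ M : Matrix (Fin n) (Fin n) ℝ, φ M = M.map (algebraMap ℝ ℂ) := fun M => rfl
  have hUl : φ Atil⁻¹ * φ Atil = 1 := by
    rw [← _root_.map_mul, Matrix.nonsing_inv_mul Atil hAtildet, φ.map_one]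
  have hUr : φ Atil * φ Atil⁻¹ = 1 := by
    rw [← _root_.map_mul, Matrix.mul_nonsing_inv Atil hAtildet, φ.map_one]
  set U : (Matrix (Fin n) (Fin n) ℂ)ˣ := ⟨φ Atil, φ Atil⁻¹, hUr, hUl⟩ with hU
  have hApc : Ap.map (algebraMap ℝ ℂ)
      = ((U⁻¹ : (Matrix (Fin n) (Fin n) ℂ)ˣ) : Matrix (Fin n) (Fin n) ℂ) * (1 + φ F)
        * (U : Matrix (Fin n) (Fin n) ℂ) := by
    rw [← hφ, hconj, _root_.map_mul, _root_.map_mul, _root_.map_add, φ.map_one]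
    rfl
  rw [hApc, spectrum.units_conjugate'] at hlam
  have hmem : lam - 1 ∈ spectrum ℂ (φ F) := by
    rw [spectrum.mem_iff] at hlam ⊢
    have heq : (algebraMap ℂ (Matrix (Fin n) (Fin n) ℂ)) (lam - 1) - φ F
        = (algebraMap ℂ (Matrix (Fin n) (Fin n) ℂ)) lam - (1 + φ F) := by
      rw [map_sub, (algebraMap ℂ (Matrix (Fin n) (Fin n) ℂ)).map_one]; abel
    rw [heq]; exact hlam
  have hb : ‖lam - 1‖ ≤ specNorm F := abs_mem_spectrum_le F (lam - 1) hmem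
  have hκ0 : 0 ≤ κ := hκ ▸ mul_nonneg (specNorm_nonneg _) (specNorm_nonneg _)
  have h2 : specNorm (W * Eᵀ * W⁻¹) ≤ κ * specNorm E := by
    calc specNorm (W * Eᵀ * W⁻¹) ≤ specNorm (W * Eᵀ) * specNorm W⁻¹ := specNorm_mul_le _ _
      _ ≤ specNorm W * specNorm Eᵀ * specNorm W⁻¹ :=
          mul_le_mul_of_nonneg_right (specNorm_mul_le _ _) (specNorm_nonneg _)
      _ = κ * specNorm E := by rw [specNorm_transpose, hκ]; ring
  have h3 : specNorm (W * Eᵀ * W⁻¹ * E) ≤ κ * specNorm E ^ 2 := by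
    calc specNorm (W * Eᵀ * W⁻¹ * E) ≤ specNorm (W * Eᵀ * W⁻¹) * specNorm E := specNorm_mul_le _ _
      _ ≤ (κ * specNorm E) * specNorm E := mul_le_mul_of_nonneg_right h2 (specNorm_nonneg _)
      _ = κ * specNorm E ^ 2 := by ring
  have hFb : specNorm F ≤ (1 + κ) * specNorm E + κ * specNorm E ^ 2 := by
    calc specNorm F ≤ specNorm (E + W * Eᵀ * W⁻¹) + specNorm (W * Eᵀ * W⁻¹ * E) :=
          specNorm_add_le _ _
      _ ≤ (specNorm E + specNorm (W * Eᵀ * W⁻¹)) + specNorm (W * Eᵀ * W⁻¹ * E) :=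
          add_le_add (specNorm_add_le _ _) le_rfl
      _ ≤ (specNorm E + κ * specNorm E) + κ * specNorm E ^ 2 :=
          add_le_add (add_le_add_right h2 _) h3
      _ = (1 + κ) * specNorm E + κ * specNorm E ^ 2 := by ring
  exact hb.trans hFb
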